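/- If a, b are C² functions of (x,t) satisfying ∂a/∂t = −c(t)·∂a/∂x + λ(t)·(b−a) and ∂b/∂t = c(t)·∂b/∂x + λ(t)·(a−b) with c(t) > 0 for all t, then p = a + b satisfies the telegraph equation with time-varying coefficients: (1/c(t))·∂/∂t[(1/c(t))·∂p/∂t] + (2λ(t)/c(t)²)·∂p/∂t = ∂²p/∂x². -/

import Mathlib

open Real

private lemma hasDerivAt_fst' (F : ℝ → ℝ → ℝ) (hF : ContDiff ℝ 2 (Function.uncurry F))
    (x t : ℝ) :
    HasDerivAt (fun y => F y t) (fderiv ℝ (Function.uncurry F) (x, t) (1, 0)) x := by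
  have h1 : HasDerivAt (fun y : ℝ => (y, t)) ((1 : ℝ), (0 : ℝ)) x :=
    (hasDerivAt_id x).prodMk (hasDerivAt_const x t)
  exact ((hF.differentiable two_ne_zero) (x, t)).hasFDerivAt.comp_hasDerivAt x h1

private lemma hasDerivAt_snd' (F : ℝ → ℝ → ℝ) (hF : ContDiff ℝ 2 (Function.uncurry F))
    (x t : ℝ) :
    HasDerivAt (fun s => F x s) (fderiv ℝ (Function.uncurry F) (x, t) (0, 1)) t := by
  have h1 : HasDerivAt (fun s : ℝ => (x, s)) ((0 : ℝ), (1 : ℝ)) t :=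
    (hasDerivAt_const t x).prodMk (hasDerivAt_id t)
  exact ((hF.differentiable two_ne_zero) (x, t)).hasFDerivAt.comp_hasDerivAt t h1

private lemma hasDerivAt_fderiv_fst' (G : ℝ × ℝ → ℝ) (hG : ContDiff ℝ 2 G) (v : ℝ × ℝ)
    (x t : ℝ) :
    HasDerivAt (fun y => fderiv ℝ G (y, t) v) (fderiv ℝ (fderiv ℝ G) (x, t) (1, 0) v) x := by
  have hf : ContDiff ℝ 1 (fderiv ℝ G) := hG.fderiv_right (by norm_num)
  have h1 : HasDerivAt (fun y : ℝ => (y, t)) ((1 : ℝ), (0 : ℝ)) x :=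
    (hasDerivAt_id x).prodMk (hasDerivAt_const x t)
  have h2 := ((hf.differentiable one_ne_zero) (x, t)).hasFDerivAt.comp_hasDerivAt x h1
  exact ((ContinuousLinearMap.apply ℝ ℝ v).hasFDerivAt).comp_hasDerivAt x h2

private lemma hasDerivAt_fderiv_snd' (G : ℝ × ℝ → ℝ) (hG : ContDiff ℝ 2 G) (v : ℝ × ℝ)
    (x t : ℝ) :
    HasDerivAt (fun s => fderiv ℝ G (x, s) v) (fderiv ℝ (fderiv ℝ G) (x, t) (0, 1) v) t := by
  have hf : ContDiff ℝ 1 (fderiv ℝ G) := hG.fderiv_right (by norm_num)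
  have h1 : HasDerivAt (fun s : ℝ => (x, s)) ((0 : ℝ), (1 : ℝ)) t :=
    (hasDerivAt_const t x).prodMk (hasDerivAt_id t)
  have h2 := ((hf.differentiable one_ne_zero) (x, t)).hasFDerivAt.comp_hasDerivAt t h1
  exact ((ContinuousLinearMap.apply ℝ ℝ v).hasFDerivAt).comp_hasDerivAt t h2

private lemma mixed_partials (F : ℝ → ℝ → ℝ) (hF : ContDiff ℝ 2 (Function.uncurry F))
    (x t : ℝ) :
    deriv (fun s => deriv (fun y => F y s) x) t
      = deriv (fun y => deriv (fun s => F y s) t) x := by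
  have hL : (fun s => deriv (fun y => F y s) x)
      = fun s => fderiv ℝ (Function.uncurry F) (x, s) (1, 0) :=
    funext fun s => (hasDerivAt_fst' F hF x s).deriv
  have hR : (fun y => deriv (fun s => F y s) t)
      = fun y => fderiv ℝ (Function.uncurry F) (y, t) (0, 1) :=
    funext fun y => (hasDerivAt_snd' F hF y t).deriv
  rw [hL, hR, (hasDerivAt_fderiv_snd' _ hF (1, 0) x t).deriv,
    (hasDerivAt_fderiv_fst' _ hF (0, 1) x t).deriv]
  have hdf : ∀ y, HasFDerivAt (Function.uncurry F) (fderiv ℝ (Function.uncurry F) y) y :=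
    fun y => ((hF.differentiable two_ne_zero) y).hasFDerivAt
  have hdf2 : HasFDerivAt (fderiv ℝ (Function.uncurry F))
      (fderiv ℝ (fderiv ℝ (Function.uncurry F)) (x, t)) (x, t) :=
    (((hF.fderiv_right (m := 1) (by norm_num)).differentiable one_ne_zero) (x, t)).hasFDerivAt
  exact second_derivative_symmetric hdf hdf2 (0, 1) (1, 0)

/-- if `a, b` are C² solutions of the forward system with speed
`c(t) > 0` and rate `l(t)`, then `p = a + b` satisfies the telegraph equation
with time-varying coefficients
`(1/c)·∂/∂t[(1/c)·∂p/∂t] + (2l/c²)·∂p/∂t = ∂²p/∂x²`. -/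
theorem stmt1 (a b : ℝ → ℝ → ℝ) (c l : ℝ → ℝ)
    (ha : ContDiff ℝ 2 (Function.uncurry a)) (hb : ContDiff ℝ 2 (Function.uncurry b))
    (hc : ContDiff ℝ 1 c) (hcpos : ∀ t, 0 < c t) (hl : Continuous l)
    (heqa : ∀ x t, deriv (fun s => a x s) t =
      -c t * deriv (fun y => a y t) x + l t * (b x t - a x t))
    (heqb : ∀ x t, deriv (fun s => b x s) t =
      c t * deriv (fun y => b y t) x + l t * (a x t - b x t))
    (p : ℝ → ℝ → ℝ) (hp : ∀ x t, p x t = a x t + b x t) :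
    ∀ x t,
      (1 / c t) * deriv (fun s => (1 / c s) * deriv (fun u => p x u) s) t
        + (2 * l t / (c t) ^ 2) * deriv (fun s => p x s) t
      = deriv (deriv (fun y => p y t)) x := by
  intro x t
  have hQ : ContDiff ℝ 2 (Function.uncurry fun x t => b x t - a x t) := hb.sub ha
  have hP : ContDiff ℝ 2 (Function.uncurry fun x t => a x t + b x t) := ha.add hb
  -- differentiability of the partial maps
  have hdat : ∀ x t, DifferentiableAt ℝ (fun s => a x s) t :=
    fun x t => (hasDerivAt_snd' a ha x t).differentiableAt
  have hdbt : ∀ x t, DifferentiableAt ℝ (fun s => b x s) t :=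
    fun x t => (hasDerivAt_snd' b hb x t).differentiableAt
  have hdax : ∀ x t, DifferentiableAt ℝ (fun y => a y t) x :=
    fun x t => (hasDerivAt_fst' a ha x t).differentiableAt
  have hdbx : ∀ x t, DifferentiableAt ℝ (fun y => b y t) x :=
    fun x t => (hasDerivAt_fst' b hb x t).differentiableAt
  -- partial derivatives of sums/differences
  have hp_x : ∀ x t, deriv (fun y => a y t + b y t) x
      = deriv (fun y => a y t) x + deriv (fun y => b y t) x :=
    fun x t => deriv_add (hdax x t) (hdbx x t)
  have hq_x : ∀ x t, deriv (fun y => b y t - a y t) x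
      = deriv (fun y => b y t) x - deriv (fun y => a y t) x :=
    fun x t => deriv_sub (hdbx x t) (hdax x t)
  -- time derivatives via the system
  have hp_t : ∀ x t, deriv (fun s => a x s + b x s) t
      = c t * (deriv (fun y => b y t) x - deriv (fun y => a y t) x) := by
    intro x t
    rw [deriv_fun_add (hdat x t) (hdbt x t), heqa, heqb]; ring
  have hq_t : ∀ x t, deriv (fun s => b x s - a x s) t
      = c t * (deriv (fun y => a y t) x + deriv (fun y => b y t) x)
        - 2 * l t * (b x t - a x t) := by
    intro x t
    rw [deriv_fun_sub (hdbt x t) (hdat x t), heqa, heqb]; ring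
  -- rewrite p in the goal
  simp only [hp]
  -- the inner function equals the x-derivative of q = b - a
  have hinner : (fun s => 1 / c s * deriv (fun u => a x u + b x u) s)
      = fun s => deriv (fun y => b y s - a y s) x := by
    funext s
    rw [hp_t x s, hq_x x s]
    field_simp [(hcpos s).ne']
  rw [hinner]
  -- exchange the mixed partial derivatives
  have hmix : deriv (fun s => deriv (fun y => b y s - a y s) x) t
      = deriv (fun y => deriv (fun s => b y s - a y s) t) x :=
    mixed_partials (fun x t => b x t - a x t) hQ x t
  rw [hmix]
  -- differentiate the q-equation in x
  have houterfun : (fun y => deriv (fun s => b y s - a y s) t)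
      = fun y => c t * deriv (fun z => a z t + b z t) y - 2 * l t * (b y t - a y t) := by
    funext y
    rw [hq_t y t, hp_x y t]
  have hdPx : DifferentiableAt ℝ (fun y => deriv (fun z => a z t + b z t) y) x := by
    have he : (fun y => deriv (fun z => a z t + b z t) y)
        = fun y => fderiv ℝ (Function.uncurry fun x t => a x t + b x t) (y, t) (1, 0) :=
      funext fun y => (hasDerivAt_fst' (fun x t => a x t + b x t) hP y t).deriv
    rw [he]
    exact (hasDerivAt_fderiv_fst' _ hP (1, 0) x t).differentiableAt
  have hdq : DifferentiableAt ℝ (fun y => b y t - a y t) x :=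
    (hasDerivAt_fst' (fun x t => b x t - a x t) hQ x t).differentiableAt
  have houter : deriv (fun y => deriv (fun s => b y s - a y s) t) x
      = c t * deriv (deriv (fun z => a z t + b z t)) x
        - 2 * l t * (deriv (fun y => b y t) x - deriv (fun y => a y t) x) := by
    rw [houterfun, deriv_fun_sub ((hdPx.const_mul _)) (hdq.const_mul _),
      deriv_const_mul _ hdPx, deriv_const_mul _ hdq, hq_x x t]
  rw [houter, hp_t x t]
  have hcne : c t ≠ 0 := (hcpos t).ne'
  field_simp
  ring
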